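/- arXiv:1705.07765 — 2 statements merged into one kernel-verified Lean document; each statement's English description precedes it below -/
import Mathlib

section
/- Let A ∈ ℝ^{n×n} be a symmetric matrix with simple spectrum (n distinct eigenvalues), and let H ≤ Aut(A) be a subgroup whose action on the indices {1,…,n} is transitive. Then H = Aut(A), and DS(A) is convex exact: Aut_conv(A) = conv(Aut(A)). -/
/- Setting: graphs are symmetric real n×n matrices. `pm n σ` is the permutation
matrix of `σ` (entry (i,j) equals 1 iff σ j = i, so it "sends j to σ j").
`DS n` is the set of doubly stochastic matrices, `Aut A` the set of permutation
matrices commuting with `A`, and `AutConv A` its doubly stochastic relaxation. -/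

open Matrix MeasureTheory Finset

noncomputable section

def pm (n : ℕ) (σ : Equiv.Perm (Fin n)) : Matrix (Fin n) (Fin n) ℝ :=
  Matrix.of fun i j => if σ j = i then (1 : ℝ) else 0

def IsPermMatrix {n : ℕ} (P : Matrix (Fin n) (Fin n) ℝ) : Prop :=
  ∃ σ : Equiv.Perm (Fin n), P = pm n σ

def DS (n : ℕ) : Set (Matrix (Fin n) (Fin n) ℝ) :=
  {S | (∀ i j, 0 ≤ S i j) ∧ (∀ i, ∑ j, S i j = 1) ∧ (∀ j, ∑ i, S i j = 1)}

def Aut {n : ℕ} (A : Matrix (Fin n) (Fin n) ℝ) : Set (Matrix (Fin n) (Fin n) ℝ) :=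
  {P | IsPermMatrix P ∧ A * P = P * A}

def AutConv {n : ℕ} (A : Matrix (Fin n) (Fin n) ℝ) : Set (Matrix (Fin n) (Fin n) ℝ) :=
  {S | S ∈ DS n ∧ A * S = S * A}

def ConvexExact {n : ℕ} (A : Matrix (Fin n) (Fin n) ℝ) : Prop :=
  AutConv A = convexHull ℝ (Aut A)

/-- The subgroup `H` of permutations, realized as a set of permutation matrices. -/
def matSet {n : ℕ} (H : Subgroup (Equiv.Perm (Fin n))) : Set (Matrix (Fin n) (Fin n) ℝ) :=
  (pm n) '' (H : Set (Equiv.Perm (Fin n)))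

/-- A real square matrix has simple spectrum: its characteristic polynomial has as many
distinct real roots as the size of the matrix (all eigenvalues real and distinct). -/
def SimpleSpectrum {m : Type*} [Fintype m] [DecidableEq m] (M : Matrix m m ℝ) : Prop :=
  M.charpoly.roots.toFinset.card = Fintype.card m

namespace Stmt8Aux

open Polynomial

variable {n : ℕ}

/-! ### permutation matrix lemmas -/

lemma pm_apply (σ : Equiv.Perm (Fin n)) (i j) : pm n σ i j = if σ j = i then (1:ℝ) else 0 := rfl

lemma pm_mul_apply (σ : Equiv.Perm (Fin n)) (M : Matrix (Fin n) (Fin n) ℝ) (i j) :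
    (pm n σ * M) i j = M (σ.symm i) j := by
  simp only [Matrix.mul_apply, pm_apply, ite_mul, one_mul, zero_mul]
  rw [Finset.sum_eq_single (σ.symm i)]
  · simp
  · intro k _ hk; rw [if_neg]; intro h; exact hk (by simp [← h])
  · simp

lemma mul_pm_apply (M : Matrix (Fin n) (Fin n) ℝ) (σ : Equiv.Perm (Fin n)) (i j) :
    (M * pm n σ) i j = M i (σ j) := by
  simp only [Matrix.mul_apply, pm_apply, mul_ite, mul_one, mul_zero]
  rw [Finset.sum_eq_single (σ j)] <;> simp +contextual [eq_comm]

lemma pm_mul (σ τ : Equiv.Perm (Fin n)) : pm n σ * pm n τ = pm n (σ * τ) := by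
  ext i j
  rw [pm_mul_apply, pm_apply, pm_apply, Equiv.Perm.mul_apply]
  by_cases h : τ j = σ.symm i
  · rw [if_pos h, if_pos (by rw [h]; simp)]
  · rw [if_neg h, if_neg (fun hh => h (by rw [← hh]; simp))]

lemma pm_inj {σ τ : Equiv.Perm (Fin n)} (h : pm n σ = pm n τ) : σ = τ := by
  ext j : 1
  have := congrFun (congrFun h (σ j)) j
  simp only [pm_apply, if_pos rfl] at this
  by_contra hne
  rw [if_neg (fun hh : τ j = σ j => hne hh.symm)] at this
  norm_num at this

lemma pm_row_sum (σ : Equiv.Perm (Fin n)) (i) : ∑ j, pm n σ i j = 1 := by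
  simp only [pm_apply]
  rw [Finset.sum_eq_single (σ.symm i)]
  · simp
  · intro k _ hk; rw [if_neg (fun h => hk (by simp [← h]))]
  · simp

lemma pm_col_sum (σ : Equiv.Perm (Fin n)) (j) : ∑ i, pm n σ i j = 1 := by
  simp only [pm_apply]
  rw [Finset.sum_eq_single (σ j)] <;> simp +contextual [eq_comm]

/-! ### charpoly under unitary conjugation -/

lemma charpoly_conj (U A : Matrix (Fin n) (Fin n) ℝ) (h1 : U * star U = 1) :
    (U * A * star U).charpoly = A.charpoly := by
  have hmap : ∀ (M N : Matrix (Fin n) (Fin n) ℝ),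
      (M * N).map (C : ℝ →+* ℝ[X]) = M.map C * N.map C := fun M N => Matrix.map_mul
  have key : charmatrix (U * A * star U) = U.map C * charmatrix A * (star U).map C := by
    rw [charmatrix, charmatrix, Matrix.mul_sub, Matrix.sub_mul]
    congr 1
    · have : (diagonal fun _ : Fin n => (X : ℝ[X]))
          = (X : ℝ[X]) • (1 : Matrix (Fin n) (Fin n) ℝ[X]) := by
        rw [Matrix.smul_one_eq_diagonal]
      rw [scalar_apply, this, mul_smul_comm, smul_mul_assoc, mul_one, ← hmap, h1,
        Matrix.map_one _ (map_zero C) (map_one C)]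
    · simp only [RingHom.mapMatrix_apply]
      rw [← hmap, ← hmap]
  rw [Matrix.charpoly, key, det_mul, det_mul, mul_comm ((U.map C).det), mul_assoc,
    ← det_mul, ← hmap, h1, Matrix.map_one _ (map_zero C) (map_one C), det_one, mul_one]
  rfl

/-! ### spectral lemmas -/

section Spec
variable {A : Matrix (Fin n) (Fin n) ℝ} (hH : A.IsHermitian)

lemma spectral' : A = (hH.eigenvectorUnitary : Matrix (Fin n) (Fin n) ℝ) * diagonal hH.eigenvalues
    * star (hH.eigenvectorUnitary : Matrix (Fin n) (Fin n) ℝ) := by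
  have := hH.spectral_theorem
  rw [Unitary.conjStarAlgAut_apply] at this
  exact this

lemma hU1 : (hH.eigenvectorUnitary : Matrix (Fin n) (Fin n) ℝ)
    * star (hH.eigenvectorUnitary : Matrix (Fin n) (Fin n) ℝ) = 1 :=
  (Matrix.mem_unitaryGroup_iff).mp hH.eigenvectorUnitary.2

lemma hU2 : star (hH.eigenvectorUnitary : Matrix (Fin n) (Fin n) ℝ)
    * (hH.eigenvectorUnitary : Matrix (Fin n) (Fin n) ℝ) = 1 :=
  (Matrix.mem_unitaryGroup_iff').mp hH.eigenvectorUnitary.2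

lemma eig_inj (hs : SimpleSpectrum A) : Function.Injective hH.eigenvalues := by
  have hcp : A.charpoly = ∏ i, (X - C (hH.eigenvalues i)) := by
    conv_lhs => rw [spectral' hH]
    rw [charpoly_conj _ _ (hU1 hH), charpoly_of_upperTriangular _ (blockTriangular_diagonal _)]
    simp
  have hroots : A.charpoly.roots = (univ.val.map hH.eigenvalues) := by
    rw [hcp, ← Polynomial.roots_multiset_prod_X_sub_C (univ.val.map hH.eigenvalues)]
    congr 1
    rw [Multiset.map_map]
    rfl
  have : (univ.image hH.eigenvalues).card = (univ : Finset (Fin n)).card := by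
    have h2 : A.charpoly.roots.toFinset = univ.image hH.eigenvalues := by
      rw [hroots, Multiset.toFinset_map, Finset.val_toFinset]
    rw [← h2, hs, Finset.card_univ]
  have := Finset.card_image_iff.mp this
  intro a b hab
  exact this (mem_coe.mpr (mem_univ a)) (mem_coe.mpr (mem_univ b)) hab

def conjU : Matrix (Fin n) (Fin n) ℝ → Matrix (Fin n) (Fin n) ℝ :=
  fun S => star (hH.eigenvectorUnitary : Matrix (Fin n) (Fin n) ℝ) * S
    * (hH.eigenvectorUnitary : Matrix (Fin n) (Fin n) ℝ)

lemma conjU_mul (S T : Matrix (Fin n) (Fin n) ℝ) :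
    conjU hH S * conjU hH T = conjU hH (S * T) := by
  unfold conjU
  simp only [Matrix.mul_assoc]
  rw [← Matrix.mul_assoc (hH.eigenvectorUnitary : Matrix (Fin n) (Fin n) ℝ)
    (star (hH.eigenvectorUnitary : Matrix (Fin n) (Fin n) ℝ)), hU1, Matrix.one_mul]

lemma conjU_A : conjU hH A = diagonal hH.eigenvalues := by
  have h := spectral' hH
  show star (hH.eigenvectorUnitary : Matrix (Fin n) (Fin n) ℝ) * A
    * (hH.eigenvectorUnitary : Matrix (Fin n) (Fin n) ℝ) = _
  calc star (hH.eigenvectorUnitary : Matrix (Fin n) (Fin n) ℝ) * A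
      * (hH.eigenvectorUnitary : Matrix (Fin n) (Fin n) ℝ)
      = star (hH.eigenvectorUnitary : Matrix (Fin n) (Fin n) ℝ)
        * ((hH.eigenvectorUnitary : Matrix (Fin n) (Fin n) ℝ) * diagonal hH.eigenvalues
          * star (hH.eigenvectorUnitary : Matrix (Fin n) (Fin n) ℝ))
        * (hH.eigenvectorUnitary : Matrix (Fin n) (Fin n) ℝ) := by rw [← h]
    _ = diagonal hH.eigenvalues := by
      simp only [Matrix.mul_assoc]
      rw [hU2 hH, Matrix.mul_one, ← Matrix.mul_assoc, hU2 hH, Matrix.one_mul]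

lemma conjU_left_inv (M : Matrix (Fin n) (Fin n) ℝ) :
    (hH.eigenvectorUnitary : Matrix (Fin n) (Fin n) ℝ) * conjU hH M
      * star (hH.eigenvectorUnitary : Matrix (Fin n) (Fin n) ℝ) = M := by
  unfold conjU
  calc (hH.eigenvectorUnitary : Matrix (Fin n) (Fin n) ℝ)
      * (star (hH.eigenvectorUnitary : Matrix (Fin n) (Fin n) ℝ) * M
        * (hH.eigenvectorUnitary : Matrix (Fin n) (Fin n) ℝ))
      * star (hH.eigenvectorUnitary : Matrix (Fin n) (Fin n) ℝ)
      = ((hH.eigenvectorUnitary : Matrix (Fin n) (Fin n) ℝ)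
        * star (hH.eigenvectorUnitary : Matrix (Fin n) (Fin n) ℝ)) * M
        * ((hH.eigenvectorUnitary : Matrix (Fin n) (Fin n) ℝ)
        * star (hH.eigenvectorUnitary : Matrix (Fin n) (Fin n) ℝ)) := by
        simp only [Matrix.mul_assoc]
    _ = M := by rw [hU1 hH]; simp

lemma conjU_inj : Function.Injective (conjU hH) := by
  intro S T h
  rw [← conjU_left_inv hH S, ← conjU_left_inv hH T, h]

lemma conj_diag (hinj : Function.Injective hH.eigenvalues)
    {S : Matrix (Fin n) (Fin n) ℝ} (hS : A * S = S * A) :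
    conjU hH S = diagonal (fun i => conjU hH S i i) := by
  have hcomm : diagonal hH.eigenvalues * conjU hH S = conjU hH S * diagonal hH.eigenvalues := by
    rw [← conjU_A hH, conjU_mul, conjU_mul, hS]
  ext i j
  by_cases hij : i = j
  · subst hij; rw [diagonal_apply_eq]
  · rw [diagonal_apply_ne _ hij]
    have h1 := congrFun (congrFun hcomm i) j
    rw [Matrix.diagonal_mul, Matrix.mul_diagonal] at h1
    have h2 : (hH.eigenvalues i - hH.eigenvalues j) * conjU hH S i j = 0 := by ring_nf; linarith
    rcases mul_eq_zero.mp h2 with h | h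
    · exact absurd (hinj (by linarith)) hij
    · exact h

lemma commutant_comm (hinj : Function.Injective hH.eigenvalues)
    {S T : Matrix (Fin n) (Fin n) ℝ} (hS : A * S = S * A) (hT : A * T = T * A) :
    S * T = T * S := by
  apply conjU_inj hH
  rw [← conjU_mul, ← conjU_mul, conj_diag hH hinj hS, conj_diag hH hinj hT,
    diagonal_mul_diagonal, diagonal_mul_diagonal]
  have : (fun i => conjU hH S i i * conjU hH T i i)
      = fun i => conjU hH T i i * conjU hH S i i := by
    funext i; exact mul_comm _ _
  rw [this]

end Spec

lemma pm_mem_DS (σ : Equiv.Perm (Fin n)) : pm n σ ∈ DS n :=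
  ⟨fun i j => by rw [pm_apply]; split <;> norm_num, pm_row_sum σ, pm_col_sum σ⟩

lemma aut_subset_autConv (A : Matrix (Fin n) (Fin n) ℝ) : Aut A ⊆ AutConv A := by
  intro P hP
  obtain ⟨⟨σ, rfl⟩, hc⟩ := hP
  exact ⟨pm_mem_DS σ, hc⟩

lemma convex_autConv (A : Matrix (Fin n) (Fin n) ℝ) : Convex ℝ (AutConv A) := by
  intro x hx y hy a b ha hb hab
  obtain ⟨⟨hx0, hxr, hxc⟩, hxA⟩ := hx
  obtain ⟨⟨hy0, hyr, hyc⟩, hyA⟩ := hy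
  refine ⟨⟨?_, ?_, ?_⟩, ?_⟩
  · intro i j
    simp only [Matrix.add_apply, Matrix.smul_apply, smul_eq_mul]
    exact add_nonneg (mul_nonneg ha (hx0 i j)) (mul_nonneg hb (hy0 i j))
  · intro i
    simp only [Matrix.add_apply, Matrix.smul_apply, smul_eq_mul, Finset.sum_add_distrib,
      ← Finset.mul_sum, hxr i, hyr i, mul_one]
    exact hab
  · intro j
    simp only [Matrix.add_apply, Matrix.smul_apply, smul_eq_mul, Finset.sum_add_distrib,
      ← Finset.mul_sum, hxc j, hyc j, mul_one]
    exact hab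
  · rw [Matrix.mul_add, Matrix.add_mul, Matrix.mul_smul, Matrix.mul_smul,
      Matrix.smul_mul, Matrix.smul_mul, hxA, hyA]

end Stmt8Aux


/-- if `A` is symmetric with simple spectrum, and `H` is a subgroup of
`Aut A` acting transitively on the indices, then `H = Aut A` and `DS(A)` is convex
exact. -/
theorem stmt8 {n : ℕ} (A : Matrix (Fin n) (Fin n) ℝ) (hA : A.IsSymm)
    (hsimple : SimpleSpectrum A)
    (H : Subgroup (Equiv.Perm (Fin n)))
    (hHsub : ∀ σ ∈ H, pm n σ ∈ Aut A)
    (htrans : ∀ i j : Fin n, ∃ σ ∈ H, σ i = j) :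
    matSet H = Aut A ∧ ConvexExact A := by
  classical
  open Stmt8Aux in
  rcases Nat.eq_zero_or_pos n with hn | hn
  · -- trivial case n = 0
    subst hn
    have hsub : ∀ (X Y : Matrix (Fin 0) (Fin 0) ℝ), X = Y := by
      intro X Y; ext i j; exact i.elim0
    have hautP : ∀ P : Matrix (Fin 0) (Fin 0) ℝ, P ∈ Aut A := by
      intro P
      exact ⟨⟨1, hsub _ _⟩, hsub _ _⟩
    constructor
    · ext P
      exact ⟨fun _ => hautP P, fun _ => ⟨1, H.one_mem, hsub _ _⟩⟩
    · apply Set.Subset.antisymm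
      · intro S _
        exact subset_convexHull ℝ _ (hautP S)
      · refine convexHull_min ?_ (convex_autConv A)
        intro P hP
        exact ⟨⟨fun i j => i.elim0, fun i => i.elim0, fun j => j.elim0⟩, hsub _ _⟩
  · -- main case n > 0
    have hH : A.IsHermitian := by
      rw [Matrix.IsHermitian, conjTranspose_eq_transpose_of_trivial]
      exact hA
    have hinj : Function.Injective hH.eigenvalues := eig_inj hH hsimple
    set j₀ : Fin n := ⟨0, hn⟩ with hj₀
    -- uniqueness of the permutation sending j to i
    have huniq : ∀ σ ∈ H, ∀ τ ∈ H, ∀ j : Fin n, σ j = τ j → σ = τ := by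
      intro σ hσ τ hτ j hj
      have hρH : τ⁻¹ * σ ∈ H := H.mul_mem (H.inv_mem hτ) hσ
      have hfix : (τ⁻¹ * σ) j = j := by
        simp [Equiv.Perm.mul_apply, hj]
      have hone : τ⁻¹ * σ = 1 := by
        ext k : 1
        obtain ⟨π, hπ, hπj⟩ := htrans j k
        have hc : pm n (τ⁻¹ * σ) * pm n π = pm n π * pm n (τ⁻¹ * σ) :=
          commutant_comm hH hinj (hHsub _ hρH).2 (hHsub _ hπ).2
        rw [pm_mul, pm_mul] at hc
        have hperm : (τ⁻¹ * σ) * π = π * (τ⁻¹ * σ) := pm_inj hc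
        have h2 := congrArg (fun ρ : Equiv.Perm (Fin n) => ρ j) hperm
        simp only [Equiv.Perm.mul_apply] at h2
        rw [hπj] at h2
        simp only [Equiv.Perm.mul_apply] at hfix
        rw [hfix, hπj] at h2
        simp only [Equiv.Perm.mul_apply, Equiv.Perm.one_apply]
        exact h2
      have : σ = τ * 1 := by rw [← hone, ← mul_assoc, mul_inv_cancel, one_mul]
      simpa using this
    -- the commutant as a submodule
    set V : Submodule ℝ (Matrix (Fin n) (Fin n) ℝ) :=
      { carrier := {S | A * S = S * A}
        add_mem' := fun {a b} ha hb => by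
          simp only [Set.mem_setOf_eq] at *
          rw [Matrix.mul_add, ha, hb, Matrix.add_mul]
        zero_mem' := by simp
        smul_mem' := fun c x hx => by
          simp only [Set.mem_setOf_eq] at *
          rw [Matrix.mul_smul, hx, Matrix.smul_mul] } with hV
    -- finrank of V is at most n
    have hVrank : Module.finrank ℝ V ≤ n := by
      let φ : V →ₗ[ℝ] (Fin n → ℝ) :=
        { toFun := fun S => fun i => conjU hH S.1 i i
          map_add' := fun S T => by
            funext i
            simp only [conjU, Submodule.coe_add, Matrix.mul_add, Matrix.add_mul,
              Matrix.add_apply, Pi.add_apply]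
          map_smul' := fun c S => by
            funext i
            simp only [conjU, Submodule.coe_smul, Matrix.mul_smul, Matrix.smul_mul,
              Matrix.smul_apply, Pi.smul_apply, RingHom.id_apply] }
      have hφinj : Function.Injective φ := by
        intro S T h
        apply Subtype.ext
        apply conjU_inj hH
        have hdiag : (fun i => conjU hH S.1 i i) = (fun i => conjU hH T.1 i i) :=
          funext fun i => congrFun h i
        rw [conj_diag hH hinj S.2, conj_diag hH hinj T.2, hdiag]
      have := LinearMap.finrank_le_finrank_of_injective hφinj
      rwa [Module.finrank_pi, Fintype.card_fin] at this
    -- the span of matSet H is contained in V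
    have hWV : Submodule.span ℝ (matSet H) ≤ V := by
      rw [Submodule.span_le]
      rintro P ⟨σ, hσ, rfl⟩
      exact (hHsub σ hσ).2
    -- a linearly independent family inside matSet H
    choose σf hσfH hσfj using fun i j : Fin n => htrans j i
    have hexun : ∀ i j : Fin n, ∃ σ ∈ H, σ j = i := fun i j => ⟨σf i j, hσfH i j, hσfj i j⟩
    have hgind : LinearIndependent ℝ (fun i : Fin n => pm n (σf i j₀)) := by
      rw [Fintype.linearIndependent_iff]
      intro c hc i
      have h1 := congrFun (congrFun hc i) j₀
      simp only [Matrix.sum_apply, Matrix.smul_apply, smul_eq_mul, Matrix.zero_apply,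
        pm_apply] at h1
      have hcond : ∀ k : Fin n, ((σf k j₀) j₀ = i) = (k = i) := by
        intro k
        rw [hσfj k j₀]
      simp only [hcond, mul_ite, mul_one, mul_zero, Finset.sum_ite_eq', Finset.mem_univ,
        if_true] at h1
      exact h1
    have hrank_ge : n ≤ Module.finrank ℝ (Submodule.span ℝ (matSet H)) := by
      have h1 : Submodule.span ℝ (Set.range (fun i : Fin n => pm n (σf i j₀)))
          ≤ Submodule.span ℝ (matSet H) := by
        apply Submodule.span_mono
        rintro P ⟨i, rfl⟩
        exact ⟨σf i j₀, hσfH i j₀, rfl⟩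
      have h2 := finrank_span_eq_card hgind
      rw [Fintype.card_fin] at h2
      calc n = Module.finrank ℝ
            (Submodule.span ℝ (Set.range (fun i : Fin n => pm n (σf i j₀)))) := h2.symm
        _ ≤ _ := Submodule.finrank_mono h1
    have hWVeq : Submodule.span ℝ (matSet H) = V :=
      Submodule.eq_of_le_of_finrank_le hWV (le_trans hVrank hrank_ge)
    -- the key structural property
    have hΦ : ∀ S : Matrix (Fin n) (Fin n) ℝ, A * S = S * A →
        ∀ σ ∈ H, ∀ j, S (σ j) j = S (σ j₀) j₀ := by
      intro S hS
      have hSV : S ∈ Submodule.span ℝ (matSet H) := by rw [hWVeq]; exact hS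
      refine Submodule.span_induction
        (p := fun M _ => ∀ σ ∈ H, ∀ j, M (σ j) j = M (σ j₀) j₀) ?_ ?_ ?_ ?_ hSV
      · rintro P ⟨τ, hτ, rfl⟩ σ hσ j
        by_cases hστ : σ = τ
        · subst hστ
          rw [pm_apply, pm_apply, if_pos rfl, if_pos rfl]
        · rw [pm_apply, pm_apply,
            if_neg (fun h : τ j = σ j => hστ (huniq σ hσ τ hτ j h.symm)),
            if_neg (fun h : τ j₀ = σ j₀ => hστ (huniq σ hσ τ hτ j₀ h.symm))]
      · intro σ hσ j; rfl
      · intro x y _ _ hx hy σ hσ j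
        simp only [Matrix.add_apply, hx σ hσ j, hy σ hσ j]
      · intro a x _ hx σ hσ j
        simp only [Matrix.smul_apply, hx σ hσ j]
    -- Part 1 : matSet H = Aut A
    have hpart1 : matSet H = Aut A := by
      apply Set.Subset.antisymm
      · rintro P ⟨σ, hσ, rfl⟩
        exact hHsub σ hσ
      · rintro P ⟨⟨τ, rfl⟩, hPA⟩
        obtain ⟨σ, hσ, hσj⟩ := hexun (τ j₀) j₀
        have hτσ : τ = σ := by
          ext k : 1
          have h3 := hΦ (pm n τ) hPA σ hσ k
          rw [pm_apply, pm_apply, if_pos hσj.symm] at h3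
          by_contra hk
          rw [if_neg (fun h : τ k = σ k => hk h)] at h3
          norm_num at h3
        exact ⟨τ, by rw [hτσ]; exact hσ, rfl⟩
    refine ⟨hpart1, ?_⟩
    -- Part 2 : convex exactness
    apply Set.Subset.antisymm
    · -- AutConv ⊆ convexHull (Aut A)
      rintro S ⟨⟨hpos, hrow, hcol⟩, hSA⟩
      set Hfin : Finset (Equiv.Perm (Fin n)) :=
        Set.Finite.toFinset (Set.toFinite (H : Set (Equiv.Perm (Fin n)))) with hHfin
      have hmemHfin : ∀ σ, σ ∈ Hfin ↔ σ ∈ H := by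
        intro σ; rw [hHfin, Set.Finite.mem_toFinset]; rfl
      have hrepr : S = ∑ σ ∈ Hfin, S (σ j₀) j₀ • pm n σ := by
        ext i j
        obtain ⟨σ₀, hσ₀H, hσ₀⟩ := hexun i j
        simp only [Matrix.sum_apply, Matrix.smul_apply, smul_eq_mul, pm_apply]
        rw [Finset.sum_eq_single σ₀]
        · rw [if_pos hσ₀, mul_one, ← hΦ S hSA σ₀ hσ₀H j, hσ₀]
        · intro σ hσ hne
          rw [if_neg (fun h : σ j = i =>
            hne (huniq σ ((hmemHfin σ).mp hσ) σ₀ hσ₀H j (by rw [h, hσ₀]))), mul_zero]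
        · intro hmem
          exact absurd ((hmemHfin σ₀).mpr hσ₀H) hmem
      have hsum : ∑ σ ∈ Hfin, S (σ j₀) j₀ = 1 := by
        rw [← hcol j₀]
        apply Finset.sum_bij (fun (σ : Equiv.Perm (Fin n)) _ => σ j₀)
        · intro σ _; exact Finset.mem_univ _
        · intro σ hσ τ hτ h
          exact huniq σ ((hmemHfin σ).mp hσ) τ ((hmemHfin τ).mp hτ) j₀ h
        · intro i _
          obtain ⟨σ, hσ, hσj⟩ := hexun i j₀
          exact ⟨σ, (hmemHfin σ).mpr hσ, hσj⟩
        · intro σ _; rfl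
      rw [hrepr]
      refine Convex.sum_mem (convex_convexHull ℝ _) ?_ hsum ?_
      · intro σ _; exact hpos _ _
      · intro σ hσ
        exact subset_convexHull ℝ _ (hHsub σ ((hmemHfin σ).mp hσ))
    · exact convexHull_min (aut_subset_autConv A) (convex_autConv A)
end
end

section
/- Let G ≤ Π_n be a subgroup whose orbits on {1,…,n} are I_1,…,I_k with n_j = |I_j|, and suppose that I_r is a full orbit, i.e., n_r = |G|. For P ∈ G and orbits I_i, I_j let P_{ii}, P_{jj} denote the corresponding diagonal permutation blocks of P. For j ≠ r let V_{rj}(G) = {M ∈ ℝ^{n_r × n_j} : M P_{jj} = P_{rr} M and Mᵀ P_{rr} = P_{jj} Mᵀ for all P ∈ G}. Then the set of M ∈ V_{rj}(G) with rank(M) < n_j has measure zero with respect to the dim V_{rj}(G)-dimensional Hausdorff measure on the linear subspace V_{rj}(G); i.e., almost every M ∈ V_{rj}(G) has full rank n_j. -/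
set_option maxHeartbeats 2000000


/- Setting: a subgroup `G` of permutations of {0,…,n−1} acts on indices; `IsGOrbit G O`
says the finset `O` is an orbit of that action, and `pmBlock σ O` is the permutation
block of `σ` on `O × O` (entry (i,j) equals 1 iff σ j = i). `Vrj G Or Oj` is the space
V_{rj}(G) of O_r × O_j matrices intertwining the corresponding blocks of every element
of `G`. Measures are Hausdorff measures w.r.t. the Frobenius/Euclidean norm. -/

open Matrix MeasureTheory Finset

noncomputable section

/-- `O` is an orbit of the action of `G` on the indices. -/
def IsGOrbit {n : ℕ} (G : Subgroup (Equiv.Perm (Fin n))) (O : Finset (Fin n)) : Prop :=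
  ∃ i, ∀ x, x ∈ O ↔ ∃ σ ∈ G, σ i = x

/-- The block of the permutation matrix of `σ` on `O × O`. -/
def pmBlock {n : ℕ} (σ : Equiv.Perm (Fin n)) (O : Finset (Fin n)) :
    Matrix O O ℝ :=
  Matrix.of fun i j => if σ (j : Fin n) = (i : Fin n) then (1 : ℝ) else 0

/-- `V_{rj}(G)`: matrices `M` with `M P_{jj} = P_{rr} M` and `Mᵀ P_{rr} = P_{jj} Mᵀ`
for all `P ∈ G`. -/
def Vrj {n : ℕ} (G : Subgroup (Equiv.Perm (Fin n))) (Or Oj : Finset (Fin n)) :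
    Set (Matrix Or Oj ℝ) :=
  {M | ∀ σ ∈ G, M * pmBlock σ Oj = pmBlock σ Or * M ∧
        Mᵀ * pmBlock σ Or = pmBlock σ Oj * Mᵀ}

attribute [local instance] Matrix.frobeniusNormedAddCommGroup

instance matMeasurableSpace {m k : Type*} [Fintype m] [Fintype k] :
    MeasurableSpace (Matrix m k ℝ) := borel _

instance matBorelSpace {m k : Type*} [Fintype m] [Fintype k] :
    @BorelSpace (Matrix m k ℝ) PseudoMetricSpace.toUniformSpace.toTopologicalSpace _ := ⟨rfl⟩

/-! ### Auxiliary results -/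

section AuxPoly

open MvPolynomial

lemma poly_eval_two_var_continuous {d : ℕ} (q : Polynomial (MvPolynomial (Fin d) ℝ)) :
    Continuous (fun ya : ℝ × (Fin d → ℝ) =>
      Polynomial.eval ya.1 (q.map (MvPolynomial.eval ya.2))) := by
  have h : (fun ya : ℝ × (Fin d → ℝ) =>
      Polynomial.eval ya.1 (q.map (MvPolynomial.eval ya.2))) =
      fun ya => ∑ i ∈ Finset.range (q.natDegree + 1),
        MvPolynomial.eval ya.2 (q.coeff i) * ya.1 ^ i := by
    funext ya
    rw [Polynomial.eval_eq_sum_range' (Nat.lt_succ_of_le Polynomial.natDegree_map_le)]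
    simp [Polynomial.coeff_map]
  rw [h]
  exact continuous_finset_sum _ fun i _ =>
    ((MvPolynomial.continuous_eval _).comp continuous_snd).mul
      ((continuous_pow i).comp continuous_fst)

/-- The zero set of a nonzero multivariate polynomial over `ℝ` is Lebesgue-null. -/
lemma mv_zero_set_null : ∀ (d : ℕ) (p : MvPolynomial (Fin d) ℝ), p ≠ 0 →
    volume {x : Fin d → ℝ | MvPolynomial.eval x p = 0} = 0 := by
  intro d
  induction d with
  | zero =>
    intro p hp
    obtain ⟨r, rfl⟩ := MvPolynomial.C_surjective (Fin 0) p
    have hr : r ≠ 0 := fun h => hp (by simp [h])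
    have h2 : {x : Fin 0 → ℝ | MvPolynomial.eval x (C r) = 0} = ∅ := by
      ext x; simp [hr]
    rw [h2]; simp
  | succ d ih =>
    intro p hp
    set q := MvPolynomial.finSuccEquiv ℝ d p with hqdef
    have hq0 : q ≠ 0 := by
      simp only [hqdef, ne_eq, EmbeddingLike.map_eq_zero_iff]; exact hp
    have hc : q.leadingCoeff ≠ 0 := Polynomial.leadingCoeff_ne_zero.mpr hq0
    set T : Set (ℝ × (Fin d → ℝ)) :=
      {ya | Polynomial.eval ya.1 (q.map (MvPolynomial.eval ya.2)) = 0} with hT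
    have hTmeas : MeasurableSet T :=
      (isClosed_eq (poly_eval_two_var_continuous q) continuous_const).measurableSet
    have hS : {x : Fin (d+1) → ℝ | MvPolynomial.eval x p = 0} =
        (MeasurableEquiv.piFinSuccAbove (fun _ : Fin (d+1) => ℝ) 0) ⁻¹' T := by
      ext x
      have key : MvPolynomial.eval x p =
          Polynomial.eval (x 0) (q.map (MvPolynomial.eval (Fin.tail x))) := by
        conv_lhs => rw [← Fin.cons_self_tail x]
        rw [MvPolynomial.eval_eq_eval_mv_eval']
      simp only [Set.mem_setOf_eq, Set.mem_preimage, hT, key,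
        MeasurableEquiv.piFinSuccAbove_apply, Fin.insertNthEquiv_symm_apply,
        Fin.removeNth_zero]
    rw [hS, (volume_preserving_piFinSuccAbove (fun _ : Fin (d+1) => ℝ) 0).measure_preimage_equiv,
      Measure.volume_eq_prod]
    have hswap : ((volume : Measure ℝ).prod (volume : Measure (Fin d → ℝ))) T =
        ((volume : Measure (Fin d → ℝ)).prod (volume : Measure ℝ)) (Prod.swap ⁻¹' T) := by
      rw [← Measure.prod_swap, Measure.map_apply measurable_swap hTmeas]
    rw [hswap, Measure.measure_prod_null (measurable_swap hTmeas)]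
    have h1 : ∀ᵐ y : Fin d → ℝ, MvPolynomial.eval y q.leadingCoeff ≠ 0 := by
      rw [ae_iff]
      convert ih q.leadingCoeff hc using 2
      simp [not_not]
    filter_upwards [h1] with y hy
    have hmap : q.map (MvPolynomial.eval y) ≠ 0 := by
      intro h
      exact hy (by rw [Polynomial.leadingCoeff, ← Polynomial.coeff_map, h,
        Polynomial.coeff_zero])
    have hfin : (Prod.mk y ⁻¹' (Prod.swap ⁻¹' T)).Finite := by
      have h3 := Polynomial.finite_setOf_isRoot hmap
      convert h3 using 1
      ext x; exact Iff.rfl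
    simpa using hfin.measure_zero volume

open MvPolynomial in
/-- The Gram determinant of a linear family of matrices is a polynomial function. -/
lemma exists_det_poly {d : ℕ} {m k : Type*} [Fintype m] [Fintype k] [DecidableEq k]
    (A : (Fin d → ℝ) →ₗ[ℝ] Matrix m k ℝ) :
    ∃ p : MvPolynomial (Fin d) ℝ, ∀ x, MvPolynomial.eval x p = ((A x)ᵀ * A x).det := by
  classical
  set N : Matrix k k (MvPolynomial (Fin d) ℝ) := Matrix.of fun a b =>
    ∑ c : m, (∑ i, X i * C (A (Pi.single i 1) c a)) * (∑ i, X i * C (A (Pi.single i 1) c b))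
    with hN
  refine ⟨N.det, fun x => ?_⟩
  have hx : ∀ c a, A x c a = ∑ i, x i * A (Pi.single i 1) c a := by
    intro c a
    conv_lhs => rw [pi_eq_sum_univ x, map_sum]
    rw [Matrix.sum_apply]
    refine Finset.sum_congr rfl fun i _ => ?_
    have h1 : (fun j => if i = j then (1:ℝ) else 0) = Pi.single i 1 := by
      funext j; simp [Pi.single_apply, eq_comm]
    rw [h1, A.map_smul]
    simp
  rw [RingHom.map_det (MvPolynomial.eval x) N]
  congr 1
  ext a b
  simp only [RingHom.mapMatrix_apply, Matrix.map_apply, hN, Matrix.of_apply, Matrix.mul_apply,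
    Matrix.transpose_apply, map_sum, _root_.map_mul, hx, MvPolynomial.eval_X, MvPolynomial.eval_C]

end AuxPoly

section AuxAlg

variable {n : ℕ} (G : Subgroup (Equiv.Perm (Fin n))) (Or Oj : Finset (Fin n))

/-- `Vrj` as a submodule. -/
def VrjSub : Submodule ℝ (Matrix Or Oj ℝ) where
  carrier := Vrj G Or Oj
  add_mem' := fun {M} {M'} hM hM' σ hσ => by
    refine ⟨?_, ?_⟩
    · rw [Matrix.add_mul, Matrix.mul_add, (hM σ hσ).1, (hM' σ hσ).1]
    · rw [transpose_add, Matrix.add_mul, Matrix.mul_add, (hM σ hσ).2, (hM' σ hσ).2]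
  zero_mem' := fun σ hσ => by simp
  smul_mem' := fun c {M} hM σ hσ => by
    refine ⟨?_, ?_⟩
    · rw [Matrix.smul_mul, Matrix.mul_smul, (hM σ hσ).1]
    · rw [transpose_smul, Matrix.smul_mul, Matrix.mul_smul, (hM σ hσ).2]

lemma orbit_closed {O : Finset (Fin n)} {i : Fin n}
    (hO : ∀ x, x ∈ O ↔ ∃ σ ∈ G, σ i = x) {σ : Equiv.Perm (Fin n)} (hσ : σ ∈ G)
    {b : Fin n} (hb : b ∈ O) : σ b ∈ O := by
  obtain ⟨τ, hτ, rfl⟩ := (hO b).mp hb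
  exact (hO _).mpr ⟨σ * τ, mul_mem hσ hτ, rfl⟩

lemma mul_pmBlock_apply {O O' : Finset (Fin n)} (M : Matrix O O' ℝ)
    (σ : Equiv.Perm (Fin n)) {b : Fin n} (hb : σ b ∈ O') (a : O) (hb' : b ∈ O') :
    (M * pmBlock σ O') a ⟨b, hb'⟩ = M a ⟨σ b, hb⟩ := by
  rw [Matrix.mul_apply]
  rw [Finset.sum_eq_single (⟨σ b, hb⟩ : O')]
  · simp [pmBlock]
  · intro c _ hc
    have : ¬ (σ b = (c : Fin n)) := fun h => hc (Subtype.ext h.symm)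
    simp [pmBlock, this]
  · intro h; exact absurd (Finset.mem_univ _) h

lemma pmBlock_mul_apply {O O' : Finset (Fin n)} (M : Matrix O O' ℝ)
    (σ : Equiv.Perm (Fin n)) {a : Fin n} (ha : σ⁻¹ a ∈ O) (ha' : a ∈ O) (b : O') :
    (pmBlock σ O * M) ⟨a, ha'⟩ b = M ⟨σ⁻¹ a, ha⟩ b := by
  rw [Matrix.mul_apply]
  rw [Finset.sum_eq_single (⟨σ⁻¹ a, ha⟩ : O)]
  · have : σ (σ⁻¹ a) = a := by simp
    simp [pmBlock, this]
  · intro c _ hc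
    have : ¬ (σ (c : Fin n) = a) := by
      intro h
      exact hc (Subtype.ext (by simp [← h]))
    simp [pmBlock, this]
  · intro h; exact absurd (Finset.mem_univ _) h

variable {G Or Oj}

/-- Existence of a full-rank element of `Vrj`. -/
lemma exists_fullrank (hOr : IsGOrbit G Or) (hOj : IsGOrbit G Oj)
    (hfull : Or.card = Nat.card G) :
    ∃ M₀ : Matrix Or Oj ℝ, M₀ ∈ Vrj G Or Oj ∧ (M₀ᵀ * M₀).det ≠ 0 := by
  classical
  obtain ⟨ir, hir⟩ := hOr
  obtain ⟨ij, hij⟩ := hOj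
  set φ : G → {x // x ∈ Or} := fun σ => ⟨(σ : Equiv.Perm (Fin n)) ir,
      (hir _).mpr ⟨(σ : Equiv.Perm (Fin n)), σ.2, rfl⟩⟩ with hφ
  have hsurj : Function.Surjective φ := by
    rintro ⟨a, ha⟩
    obtain ⟨σ, hσ, rfl⟩ := (hir a).mp ha
    exact ⟨⟨σ, hσ⟩, rfl⟩
  have hbij : Function.Bijective φ := by
    rw [Nat.bijective_iff_surjective_and_card]
    refine ⟨hsurj, ?_⟩
    rw [Nat.card_eq_fintype_card (α := {x // x ∈ Or}), Fintype.card_coe] at *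
    omega
  set ψ : {x // x ∈ Or} → G := fun a => (Equiv.ofBijective φ hbij).symm a with hψ
  have hψφ : ∀ a, φ (ψ a) = a := fun a => (Equiv.ofBijective φ hbij).apply_symm_apply a
  have hψ_eq : ∀ (a : {x // x ∈ Or}) (τ : G), ((τ : Equiv.Perm (Fin n)) ir = (a : Fin n)) →
      ψ a = τ := by
    intro a τ hτ
    apply hbij.1
    rw [hψφ]
    exact Subtype.ext hτ.symm
  have hu : ∀ a : {x // x ∈ Or}, ((ψ a : Equiv.Perm (Fin n))) ir = (a : Fin n) := by
    intro a
    have := hψφ a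
    rw [hφ] at this
    exact congrArg Subtype.val this
  set M₀ : Matrix Or Oj ℝ := Matrix.of fun a b =>
    if ((ψ a : Equiv.Perm (Fin n))) ij = (b : Fin n) then 1 else 0 with hM₀
  have hMem : M₀ ∈ Vrj G Or Oj := by
    intro σ hσ
    constructor
    · ext a b
      rw [mul_pmBlock_apply M₀ σ (orbit_closed G hij hσ b.2) a b.2]
      rw [pmBlock_mul_apply M₀ σ (orbit_closed G hir (inv_mem hσ) a.2) a.2 b]
      have hrel : ψ ⟨σ⁻¹ (a : Fin n), orbit_closed G hir (inv_mem hσ) a.2⟩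
          = ⟨σ, hσ⟩⁻¹ * ψ a := by
        apply hψ_eq
        simp [Equiv.Perm.mul_apply, hu a]
      simp only [hM₀, Matrix.of_apply, hrel]
      congr 1
      simp only [Subgroup.coe_mul, InvMemClass.coe_inv, Equiv.Perm.mul_apply, eq_iff_iff]
      constructor
      · intro h; rw [h]; simp
      · intro h; rw [← h]; simp
    · ext b a
      rw [mul_pmBlock_apply M₀ᵀ σ (orbit_closed G hir hσ a.2) b a.2]
      rw [pmBlock_mul_apply M₀ᵀ σ (orbit_closed G hij (inv_mem hσ) b.2) b.2 a]
      simp only [Matrix.transpose_apply]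
      have hrel : ψ ⟨σ ((a : Fin n)), orbit_closed G hir hσ a.2⟩ = ⟨σ, hσ⟩ * ψ a := by
        apply hψ_eq
        simp [Equiv.Perm.mul_apply, hu a]
      simp only [hM₀, Matrix.of_apply, hrel]
      congr 1
      simp only [Subgroup.coe_mul, Equiv.Perm.mul_apply, eq_iff_iff]
      constructor
      · intro h; rw [← h]; simp
      · intro h; rw [h]; simp
  refine ⟨M₀, hMem, ?_⟩
  have hdiag : M₀ᵀ * M₀ = Matrix.diagonal (fun b : {x // x ∈ Oj} =>
      ((Finset.univ.filter (fun a : {x // x ∈ Or} =>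
        ((ψ a : Equiv.Perm (Fin n))) ij = (b : Fin n))).card : ℝ)) := by
    ext b b'
    rw [Matrix.mul_apply]
    by_cases hbb : b = b'
    · subst hbb
      simp only [Matrix.diagonal_apply_eq, hM₀, Matrix.transpose_apply, Matrix.of_apply]
      rw [Finset.card_filter]
      push_cast
      refine Finset.sum_congr rfl fun a _ => ?_
      by_cases h : ((ψ a : Equiv.Perm (Fin n))) ij = (b : Fin n) <;> simp [h]
    · rw [Matrix.diagonal_apply_ne _ hbb]
      apply Finset.sum_eq_zero
      intro a _
      simp only [hM₀, Matrix.transpose_apply, Matrix.of_apply]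
      by_cases h : ((ψ a : Equiv.Perm (Fin n))) ij = (b : Fin n)
      · have h2 : ¬ ((ψ a : Equiv.Perm (Fin n))) ij = (b' : Fin n) := by
          intro h'
          exact hbb (Subtype.ext (h ▸ h'.symm ▸ rfl))
        have h3 : ¬ (b : Fin n) = (b' : Fin n) := fun hh => hbb (Subtype.ext hh)
        simp [h, h2, h3]
      · simp [h]
  rw [hdiag, Matrix.det_diagonal]
  apply Finset.prod_ne_zero_iff.mpr
  intro b _
  have : 0 < (Finset.univ.filter (fun a : {x // x ∈ Or} =>
      ((ψ a : Equiv.Perm (Fin n))) ij = (b : Fin n))).card := by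
    rw [Finset.card_pos]
    obtain ⟨τ, hτ, hτij⟩ := (hij (b : Fin n)).mp b.2
    refine ⟨φ ⟨τ, hτ⟩, Finset.mem_filter.mpr ⟨Finset.mem_univ _, ?_⟩⟩
    rw [hψ_eq (φ ⟨τ, hτ⟩) ⟨τ, hτ⟩ rfl]
    exact hτij
  positivity

end AuxAlg

section AuxMeasure

instance matInner {m k : Type*} [Fintype m] [Fintype k] :
    InnerProductSpace ℝ (Matrix m k ℝ) :=
  letI := Matrix.frobeniusNormedSpace (R := ℝ) (α := ℝ) (m := m) (n := k)
  InnerProductSpace.ofNorm (𝕜 := ℝ) fun x y => by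
    have := parallelogram_law_with_norm ℝ (WithLp.toLp 2 fun i => WithLp.toLp 2 fun j => x i j)
      (WithLp.toLp 2 fun i => WithLp.toLp 2 fun j => y i j)
    rw [sq, sq, sq, sq] at this
    exact this

/-- The Gram-degenerate locus of a subspace of matrices containing a full-rank element
is Hausdorff-null in the subspace. -/
lemma hausdorff_null_detZero {m k : Type*} [Fintype m] [Fintype k] [DecidableEq k]
    (V : Submodule ℝ (Matrix m k ℝ)) (M₀ : Matrix m k ℝ) (hM₀V : M₀ ∈ V)
    (hM₀det : (M₀ᵀ * M₀).det ≠ 0) :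
    μH[(Module.finrank ℝ ↥V : ℝ)] {M : Matrix m k ℝ | M ∈ V ∧ (Mᵀ * M).det = 0} = 0 := by
  classical
  set d := Module.finrank ℝ ↥V with hd
  set F : EuclideanSpace ℝ (Fin d) →ₗᵢ[ℝ] Matrix m k ℝ :=
    V.subtypeₗᵢ.comp (stdOrthonormalBasis ℝ ↥V).repr.symm.toLinearIsometry with hF
  have hrange : Set.range F = (V : Set (Matrix m k ℝ)) := by
    ext M
    constructor
    · rintro ⟨x, rfl⟩
      exact Subtype.coe_prop _
    · intro hM
      exact ⟨(stdOrthonormalBasis ℝ ↥V).repr ⟨M, hM⟩, by simp [hF]⟩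
  set Z : Set (Matrix m k ℝ) := {M | M ∈ V ∧ (Mᵀ * M).det = 0} with hZ
  have hZim : Z = F '' (F ⁻¹' Z) := by
    rw [Set.image_preimage_eq_inter_range, hrange]
    ext M
    simp only [hZ, Set.mem_inter_iff, Set.mem_setOf_eq, SetLike.mem_coe]
    tauto
  rw [hZim, F.isometry.hausdorffMeasure_image (Or.inl (by positivity))]
  -- the polynomial
  set L : (Fin d → ℝ) ≃ₗ[ℝ] EuclideanSpace ℝ (Fin d) :=
    (WithLp.linearEquiv 2 ℝ (Fin d → ℝ)).symm with hL
  set A : (Fin d → ℝ) →ₗ[ℝ] Matrix m k ℝ := F.toLinearMap ∘ₗ L.toLinearMap with hA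
  obtain ⟨p, hp⟩ := exists_det_poly A
  have hp0 : p ≠ 0 := by
    intro h0
    obtain ⟨x₀, hx₀⟩ : ∃ x, F x = M₀ := by
      have : M₀ ∈ Set.range F := by rw [hrange]; exact hM₀V
      exact this
    have h1 := hp (L.symm x₀)
    rw [h0] at h1
    simp only [map_zero] at h1
    apply hM₀det
    have h2 : A (L.symm x₀) = M₀ := by
      rw [hA]
      simp only [LinearMap.coe_comp, Function.comp_apply, LinearEquiv.coe_coe,
        LinearEquiv.apply_symm_apply, LinearIsometry.coe_toLinearMap]
      exact hx₀
    rw [h2] at h1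
    exact h1.symm
  -- transfer to the pi-type Lebesgue measure
  set S₀ : Set (Fin d → ℝ) := {x | MvPolynomial.eval x p = 0} with hS₀
  have hsub : F ⁻¹' Z ⊆ (fun x : Fin d → ℝ => L x) '' S₀ := by
    intro x hx
    refine ⟨L.symm x, ?_, by simp⟩
    show MvPolynomial.eval (L.symm x) p = 0
    rw [hp]
    have h2 : A (L.symm x) = F x := by
      rw [hA]
      simp
    rw [h2]
    exact hx.2
  obtain ⟨K, hK⟩ : ∃ K : NNReal, LipschitzWith K (fun x : Fin d → ℝ =>
      (L x : EuclideanSpace ℝ (Fin d))) := by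
    refine ⟨(Fintype.card (Fin d) : NNReal) ^ (1 / (2:ENNReal)).toReal, fun a b => ?_⟩
    have h := PiLp.antilipschitzWith_ofLp 2 (fun _ : Fin d => ℝ) (L a) (L b)
    simpa [hL] using h
  have hle : μH[(d:ℝ)] (F ⁻¹' Z) ≤ 0 :=
    calc μH[(d:ℝ)] (F ⁻¹' Z) ≤ μH[(d:ℝ)] ((fun x : Fin d → ℝ => L x) '' S₀) :=
          measure_mono hsub
      _ ≤ (K : ENNReal) ^ (d:ℝ) * μH[(d:ℝ)] S₀ :=
          hK.hausdorffMeasure_image_le (by positivity) S₀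
      _ = (K : ENNReal) ^ (d:ℝ) * volume S₀ := by
          congr 1
          have hcard : ((Fintype.card (Fin d) : ℝ)) = (d : ℝ) := by simp
          rw [← hcard, hausdorffMeasure_pi_real]
      _ = 0 := by
          rw [mv_zero_set_null d p hp0, mul_zero]
  exact le_antisymm hle zero_le

end AuxMeasure


/-- if `Or` is a full orbit (|Or| = |G|) and `Oj ≠ Or` is another orbit,
then almost every `M ∈ V_{rj}(G)` (w.r.t. the `dim V_{rj}(G)`-dimensional Hausdorff
measure on this linear subspace) has full rank `|Oj|`. -/
theorem stmt11 {n : ℕ} (G : Subgroup (Equiv.Perm (Fin n)))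
    (Or Oj : Finset (Fin n)) (hOr : IsGOrbit G Or) (hOj : IsGOrbit G Oj)
    (hfull : Or.card = Nat.card G) (hne : Oj ≠ Or) :
    (μH[(Module.finrank ℝ ↥(Submodule.span ℝ (Vrj G Or Oj)) : ℝ)]).restrict
        (Vrj G Or Oj)
      {M | M ∈ Vrj G Or Oj ∧ (M : Matrix Or Oj ℝ).rank < Oj.card} = 0 := by
  classical
  have hVs : Submodule.span ℝ (Vrj G Or Oj) = VrjSub G Or Oj := by
    apply le_antisymm
    · exact Submodule.span_le.mpr (fun M hM => hM)
    · exact fun M hM => Submodule.subset_span hM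
  rw [hVs]
  obtain ⟨M₀, hM₀V, hM₀det⟩ := exists_fullrank hOr hOj hfull
  have hnull := hausdorff_null_detZero (VrjSub G Or Oj) M₀ hM₀V hM₀det
  have hsub : {M : Matrix Or Oj ℝ | M ∈ Vrj G Or Oj ∧ M.rank < Oj.card} ⊆
      {M : Matrix Or Oj ℝ | M ∈ VrjSub G Or Oj ∧ (Mᵀ * M).det = 0} := by
    rintro M ⟨hM, hrank⟩
    refine ⟨hM, ?_⟩
    by_contra hdet
    have hunit : IsUnit (Mᵀ * M) :=
      (Matrix.isUnit_iff_isUnit_det _).mpr (isUnit_iff_ne_zero.mpr hdet)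
    have h1 : (Mᵀ * M).rank = Fintype.card {x // x ∈ Oj} := Matrix.rank_of_isUnit _ hunit
    have h2 : (Mᵀ * M).rank = M.rank := Matrix.rank_transpose_mul_self M
    rw [h2, Fintype.card_coe] at h1
    omega
  exact le_antisymm ((Measure.restrict_apply_le _ _).trans
    ((measure_mono hsub).trans_eq hnull)) zero_le
end
end
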